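/- Consider odd positive integers n chosen uniformly at random from {1, 3, 5, ..., 2N−1} and let k(n) = v_2(n+1) and k'(n) = v_2((3/2)^{k(n)}·(n+1) − 1). Then asymptotically as N → ∞, the natural density (among odd integers) of {n : k(n) = a} is 2^{−a}, the density of {n : k'(n) = b} conditional on k(n) = a is 2^{−b}, and the density of {n : k(n) = a and k'(n) = b} is 2^{−(a+b)}; in particular k and k' are asymptotically independent. -/

import Mathlib

def collatzK (n : Nat) : Nat := padicValNat 2 (n + 1)

def collatzApex (n : Nat) : Nat := 3 ^ collatzK n * ((n + 1) / 2 ^ collatzK n) - 1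

def collatzKp (n : Nat) : Nat := padicValNat 2 (collatzApex n)

def collatzKappa (n : Nat) : Nat := collatzApex n / 2 ^ collatzKp n

open Filter

/-! ### Auxiliary lemmas -/

section Aux

lemma count_ge (L M r : ℕ) (hr : r < M) :
    L / M ≤ ((Finset.range L).filter (fun n => n % M = r)).card := by
  rw [← Finset.card_range (L / M)]
  apply Finset.card_le_card_of_injOn (fun q => q * M + r)
  · intro q hq
    simp only [Finset.mem_coe, Finset.mem_range] at hq
    simp only [Finset.mem_coe, Finset.mem_filter, Finset.mem_range]
    constructor
    · calc q * M + r < q * M + M := by omega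
        _ = (q + 1) * M := by ring
        _ ≤ (L / M) * M := Nat.mul_le_mul_right M hq
        _ ≤ L := Nat.div_mul_le_self L M
    · show (q * M + r) % M = r
      rw [Nat.add_comm, Nat.add_mul_mod_self_right]; exact Nat.mod_eq_of_lt hr
  · intro x _ y _ h
    have h' : x * M + r = y * M + r := h
    have h2 : x * M = y * M := by omega
    exact Nat.eq_of_mul_eq_mul_right (by omega) h2

lemma count_le (L M r : ℕ) (hM : 0 < M) :
    ((Finset.range L).filter (fun n => n % M = r)).card ≤ L / M + 1 := by
  have : ((Finset.range L).filter (fun n => n % M = r)).card ≤ (Finset.range (L / M + 1)).card := by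
    apply Finset.card_le_card_of_injOn (fun n => n / M)
    · intro n hn
      simp only [Finset.mem_coe, Finset.mem_filter, Finset.mem_range] at hn ⊢
      show n / M < L / M + 1
      have := Nat.div_le_div_right (c := M) (Nat.le_of_lt hn.1)
      omega
    · intro x hx y hy h
      simp only [Finset.coe_filter, Set.mem_setOf_eq] at hx hy
      have h' : x / M = y / M := by simpa using h
      have h'' : M * (x / M) = M * (y / M) := by rw [h']
      have hx' := Nat.div_add_mod x M
      have hy' := Nat.div_add_mod y M
      have := hx.2
      have := hy.2
      omega
  simpa using this

lemma val2_iff (x e : ℕ) (hx : x ≠ 0) : padicValNat 2 x = e ↔ x % 2 ^ (e + 1) = 2 ^ e := by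
  constructor
  · intro h
    obtain ⟨u, hu⟩ := pow_padicValNat_dvd (p := 2) (n := x)
    have hnd := pow_succ_padicValNat_not_dvd (p := 2) hx
    rw [h] at hu hnd
    have hu2 : u % 2 = 1 := by
      rcases Nat.mod_two_eq_zero_or_one u with h2 | h2
      · exfalso; apply hnd
        obtain ⟨v, hv⟩ := Nat.dvd_of_mod_eq_zero h2
        exact ⟨v, by rw [hu, hv, pow_succ]; ring⟩
      · exact h2
    rw [hu, pow_succ, Nat.mul_mod_mul_left, hu2, mul_one]
  · intro h
    have h2 : x = 2 ^ (e + 1) * (x / 2 ^ (e + 1)) + 2 ^ e := by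
      conv_lhs => rw [← Nat.div_add_mod x (2 ^ (e + 1))]
      rw [h]
    set q := x / 2 ^ (e + 1)
    have hx2 : x = 2 ^ e * (2 * q + 1) := by rw [h2, pow_succ]; ring
    rw [hx2, padicValNat.mul (by positivity) (by omega),
      padicValNat.prime_pow, padicValNat.eq_zero_of_not_dvd (by omega)]
    omega

lemma tendsto_count (M r : ℕ) (hr : r < M) :
    Tendsto (fun N : ℕ => (((Finset.range (2 * N)).filter (fun n => n % M = r)).card : ℝ) / N)
      atTop (nhds (2 / M)) := by
  have hM : 0 < M := by omega
  have hM0 : (0:ℝ) < M := by exact_mod_cast hM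
  have hlo : Tendsto (fun N : ℕ => 2 / (M:ℝ) - 1 / N) atTop (nhds (2 / M)) := by
    have h := (tendsto_const_nhds : Tendsto (fun _ : ℕ => 2 / (M:ℝ)) atTop (nhds (2 / (M:ℝ))))
    simpa using h.sub tendsto_one_div_atTop_nhds_zero_nat
  have hhi : Tendsto (fun N : ℕ => 2 / (M:ℝ) + 1 / N) atTop (nhds (2 / M)) := by
    have h := (tendsto_const_nhds : Tendsto (fun _ : ℕ => 2 / (M:ℝ)) atTop (nhds (2 / (M:ℝ))))
    simpa using h.add tendsto_one_div_atTop_nhds_zero_nat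
  apply tendsto_of_tendsto_of_tendsto_of_le_of_le' hlo hhi
  · filter_upwards [eventually_ge_atTop 1] with N hN
    have hN0 : (0:ℝ) < N := by exact_mod_cast hN
    set c := ((Finset.range (2 * N)).filter (fun n => n % M = r)).card with hc
    have h1 : (2 * N) / M ≤ c := count_ge (2 * N) M r hr
    have h2 := Nat.div_add_mod (2 * N) M
    have h3 : M * ((2 * N) / M) + M > 2 * N := by
      have := Nat.mod_lt (2 * N) hM; omega
    have h4 : (M:ℝ) * ((2 * N) / M : ℕ) + M > 2 * N := by exact_mod_cast h3
    have h5 : ((2 * N) / M : ℕ) ≤ (c:ℝ) := by exact_mod_cast h1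
    rw [div_sub_div _ _ (ne_of_gt hM0) (ne_of_gt hN0), div_le_div_iff₀ (by positivity) hN0]
    have hA : 2 * (N:ℝ) - M < M * ((2 * N / M : ℕ) : ℝ) := by linarith
    have hA' := mul_lt_mul_of_pos_right hA hN0
    have hB : (M:ℝ) * ((2 * N / M : ℕ) : ℝ) * N ≤ M * c * N := by
      have := mul_le_mul_of_nonneg_left h5 hM0.le
      exact mul_le_mul_of_nonneg_right this hN0.le
    nlinarith [hA', hB]
  · filter_upwards [eventually_ge_atTop 1] with N hN
    have hN0 : (0:ℝ) < N := by exact_mod_cast hN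
    set c := ((Finset.range (2 * N)).filter (fun n => n % M = r)).card with hc
    have h1 : c ≤ (2 * N) / M + 1 := count_le (2 * N) M r hM
    have h2 : M * ((2 * N) / M) ≤ 2 * N := Nat.mul_div_le (2 * N) M
    have h4 : (M:ℝ) * ((2 * N) / M : ℕ) ≤ 2 * N := by exact_mod_cast h2
    have h5 : (c:ℝ) ≤ ((2 * N) / M : ℕ) + 1 := by exact_mod_cast h1
    rw [div_add_div _ _ (ne_of_gt hM0) (ne_of_gt hN0), div_le_div_iff₀ hN0 (by positivity)]
    have hA : (M:ℝ) * c ≤ 2 * N + M := by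
      have := mul_le_mul_of_nonneg_left h5 hM0.le
      nlinarith
    have hA' := mul_le_mul_of_nonneg_right hA hN0.le
    nlinarith [hA']

lemma exists_s (a b : ℕ) (hb : 1 ≤ b) :
    ∃ s, s % 2 = 1 ∧ s < 2 ^ (b + 1) ∧ (3 ^ a * s) % 2 ^ (b + 1) = 2 ^ b + 1 := by
  have hM2 : 0 < 2 ^ (b + 1) := by positivity
  haveI : NeZero (2 ^ (b + 1)) := ⟨by omega⟩
  have hcop : Nat.Coprime 3 (2 ^ (b + 1)) := Nat.Coprime.pow_right _ (by decide)
  have hunit : IsUnit (((3 : ℕ) : ZMod (2 ^ (b + 1)))) :=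
    (ZMod.isUnit_iff_coprime 3 (2 ^ (b + 1))).mpr hcop
  have hunita : IsUnit ((((3 : ℕ) : ZMod (2 ^ (b + 1)))) ^ a) := hunit.pow a
  set x : ZMod (2 ^ (b + 1)) :=
    ((((3 : ℕ) : ZMod (2 ^ (b + 1)))) ^ a)⁻¹ * ((2 ^ b + 1 : ℕ) : ZMod (2 ^ (b + 1))) with hx
  have hcast : ((3 ^ a * x.val : ℕ) : ZMod (2 ^ (b + 1))) =
      ((2 ^ b + 1 : ℕ) : ZMod (2 ^ (b + 1))) := by
    have hval : ((x.val : ℕ) : ZMod (2 ^ (b + 1))) = x := ZMod.natCast_rightInverse x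
    push_cast [hval]
    rw [hx, ← mul_assoc]
    rw [show ((3 : ZMod (2 ^ (b + 1)))) = (((3 : ℕ) : ZMod (2 ^ (b + 1)))) by push_cast; ring]
    rw [ZMod.mul_inv_of_unit _ hunita, one_mul]
    push_cast; ring
  have hmodeq : 3 ^ a * x.val ≡ 2 ^ b + 1 [MOD 2 ^ (b + 1)] :=
    (ZMod.natCast_eq_natCast_iff _ _ _).mp hcast
  have hlt : 2 ^ b + 1 < 2 ^ (b + 1) := by
    have h1 : 1 < 2 ^ b := Nat.one_lt_two_pow (by omega)
    have h2 : 2 ^ (b + 1) = 2 ^ b + 2 ^ b := by rw [pow_succ]; ring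
    omega
  have hmod : (3 ^ a * x.val) % 2 ^ (b + 1) = 2 ^ b + 1 := by
    have := hmodeq
    unfold Nat.ModEq at this
    rw [this, Nat.mod_eq_of_lt hlt]
  refine ⟨x.val, ?_, ZMod.val_lt x, hmod⟩
  have h2dvd : (2 : ℕ) ∣ 2 ^ (b + 1) := ⟨2 ^ b, by rw [pow_succ]; ring⟩
  have hmod2 : (3 ^ a * x.val) % 2 = (2 ^ b + 1) % 2 := Nat.ModEq.of_dvd h2dvd hmodeq
  have hevenb : 2 ^ b % 2 = 0 := by
    have : 2 ^ b = 2 * 2 ^ (b - 1) := by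
      rw [← pow_succ']
      congr 1; omega
    omega
  have h3odd : 3 ^ a % 2 = 1 := by
    rw [Nat.pow_mod]; norm_num
  have hm := Nat.mul_mod (3 ^ a) x.val 2
  rw [h3odd, one_mul] at hm
  omega

lemma pow2_lt (e : ℕ) : 2 ^ e < 2 ^ (e + 1) := by
  have : 2 ^ (e + 1) = 2 ^ e + 2 ^ e := by rw [pow_succ]; ring
  have : 0 < 2 ^ e := by positivity
  omega

lemma key1 (a n : ℕ) (ha : 1 ≤ a) :
    (Odd n ∧ collatzK n = a) ↔ n % 2 ^ (a + 1) = 2 ^ a - 1 := by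
  have hpa : 0 < 2 ^ a := by positivity
  have hlt := pow2_lt a
  constructor
  · rintro ⟨hodd, hk⟩
    have hk' : (n + 1) % 2 ^ (a + 1) = 2 ^ a := (val2_iff (n + 1) a (by omega)).mp hk
    have h1 := Nat.div_add_mod (n + 1) (2 ^ (a + 1))
    rw [hk'] at h1
    have h2 : n = 2 ^ (a + 1) * ((n + 1) / 2 ^ (a + 1)) + (2 ^ a - 1) := by omega
    rw [h2, Nat.mul_add_mod]
    exact Nat.mod_eq_of_lt (by omega)
  · intro h
    have h1 := Nat.div_add_mod n (2 ^ (a + 1))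
    rw [h] at h1
    set q := n / 2 ^ (a + 1) with hq
    have hn1 : n + 1 = 2 ^ (a + 1) * q + 2 ^ a := by omega
    have he1 : 2 ^ (a + 1) * q = 2 * (2 ^ a * q) := by rw [pow_succ]; ring
    have he2 : 2 ^ a = 2 * 2 ^ (a - 1) := by
      rw [← pow_succ']; congr 1; omega
    constructor
    · rw [Nat.odd_iff]; omega
    · refine (val2_iff (n + 1) a (by omega)).mpr ?_
      rw [hn1, Nat.mul_add_mod]
      exact Nat.mod_eq_of_lt hlt

lemma key2 (a b s n : ℕ) (ha : 1 ≤ a) (hb : 1 ≤ b) (hs1 : s % 2 = 1) (hs2 : s < 2 ^ (b + 1))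
    (hs3 : (3 ^ a * s) % 2 ^ (b + 1) = 2 ^ b + 1) :
    (Odd n ∧ collatzK n = a ∧ collatzKp n = b) ↔ n % 2 ^ (a + b + 1) = 2 ^ a * s - 1 := by
  have hpa : 0 < 2 ^ a := by positivity
  have hpb : 0 < 2 ^ b := by positivity
  have hM2 : 0 < 2 ^ (b + 1) := by positivity
  have hMsplit : 2 ^ (a + b + 1) = 2 ^ a * 2 ^ (b + 1) := by
    rw [← pow_add]
    congr 1
  have h3a : 3 ≤ 3 ^ a := by
    calc 3 = 3 ^ 1 := (pow_one 3).symm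
    _ ≤ 3 ^ a := Nat.pow_le_pow_right (by norm_num) ha
  have hr1 : 1 ≤ 2 ^ a * s := Nat.mul_pos hpa (by omega)
  have hrlt : 2 ^ a * s - 1 < 2 ^ (a + b + 1) := by
    have : 2 ^ a * s < 2 ^ a * 2 ^ (b + 1) := by
      exact mul_lt_mul_of_pos_left hs2 hpa
    omega
  constructor
  · rintro ⟨hodd, hk, hkp⟩
    have hk' : (n + 1) % 2 ^ (a + 1) = 2 ^ a := (val2_iff (n + 1) a (by omega)).mp hk
    have h1 := Nat.div_add_mod (n + 1) (2 ^ (a + 1))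
    rw [hk'] at h1
    set q := (n + 1) / 2 ^ (a + 1) with hq
    set m := 2 * q + 1 with hm
    have hsplit : 2 ^ (a + 1) * q = 2 ^ a * (2 * q) := by rw [pow_succ]; ring
    have hnm : n + 1 = 2 ^ a * m := by
      rw [hm, Nat.mul_add, Nat.mul_one]; omega
    have hdiv : (n + 1) / 2 ^ a = m := by rw [hnm]; exact Nat.mul_div_cancel_left _ hpa
    have hapex : collatzApex n = 3 ^ a * m - 1 := by
      unfold collatzApex; rw [hk, hdiv]
    have hmge : 1 ≤ m := by omega
    have h3am : 3 ≤ 3 ^ a * m := le_trans h3a (Nat.le_mul_of_pos_right _ hmge)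
    have hkp' : collatzApex n % 2 ^ (b + 1) = 2 ^ b :=
      (val2_iff _ b (by rw [hapex]; omega)).mp hkp
    rw [hapex] at hkp'
    have h2 := Nat.div_add_mod (3 ^ a * m - 1) (2 ^ (b + 1))
    rw [hkp'] at h2
    set t := (3 ^ a * m - 1) / 2 ^ (b + 1) with ht
    have h3 : 3 ^ a * m = 2 ^ (b + 1) * t + (2 ^ b + 1) := by omega
    have h4 : (3 ^ a * m) % 2 ^ (b + 1) = 2 ^ b + 1 := by
      rw [h3, Nat.mul_add_mod]
      exact Nat.mod_eq_of_lt (by have := pow2_lt b; omega)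
    have hcongr : 3 ^ a * m ≡ 3 ^ a * s [MOD 2 ^ (b + 1)] := by
      unfold Nat.ModEq; rw [h4, hs3]
    have hcop : Nat.gcd (2 ^ (b + 1)) (3 ^ a) = 1 :=
      Nat.Coprime.pow (b + 1) a (by decide : Nat.Coprime 2 3)
    have hms : m ≡ s [MOD 2 ^ (b + 1)] := Nat.ModEq.cancel_left_of_coprime hcop hcongr
    have hn1 : n + 1 ≡ 2 ^ a * s [MOD 2 ^ a * 2 ^ (b + 1)] := by
      rw [hnm]; exact Nat.ModEq.mul_left' _ hms
    have hfin : n ≡ 2 ^ a * s - 1 [MOD 2 ^ (a + b + 1)] := by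
      apply Nat.ModEq.add_right_cancel' 1
      rw [Nat.sub_add_cancel hr1, hMsplit]
      exact hn1
    unfold Nat.ModEq at hfin
    rw [hfin]
    exact Nat.mod_eq_of_lt hrlt
  · intro h
    have h1 := Nat.div_add_mod n (2 ^ (a + b + 1))
    rw [h] at h1
    set q := n / 2 ^ (a + b + 1) with hq
    have hn1 : n + 1 = 2 ^ (a + b + 1) * q + 2 ^ a * s := by omega
    set m := 2 ^ (b + 1) * q + s with hm
    have hnm : n + 1 = 2 ^ a * m := by
      rw [hn1, hm, hMsplit]; ring
    have hmodd : m % 2 = 1 := by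
      have he : 2 ^ (b + 1) * q = 2 * (2 ^ b * q) := by rw [pow_succ]; ring
      omega
    have hmge : 1 ≤ m := by omega
    have hodd : Odd n := by
      rw [Nat.odd_iff]
      have he2 : 2 ^ a = 2 * 2 ^ (a - 1) := by rw [← pow_succ']; congr 1; omega
      have : n + 1 = 2 * (2 ^ (a - 1) * m) := by rw [hnm, he2]; ring
      omega
    have hk : collatzK n = a := by
      refine (val2_iff (n + 1) a (by omega)).mpr ?_
      have hmsplit : n + 1 = 2 ^ (a + 1) * (m / 2) + 2 ^ a := by
        have hm2 := Nat.div_add_mod m 2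
        rw [hmodd] at hm2
        calc n + 1 = 2 ^ a * m := hnm
        _ = 2 ^ a * (2 * (m / 2) + 1) := by rw [hm2]
        _ = 2 ^ (a + 1) * (m / 2) + 2 ^ a := by rw [pow_succ]; ring
      rw [hmsplit, Nat.mul_add_mod]
      exact Nat.mod_eq_of_lt (pow2_lt a)
    have hdiv : (n + 1) / 2 ^ a = m := by rw [hnm]; exact Nat.mul_div_cancel_left _ hpa
    have hapex : collatzApex n = 3 ^ a * m - 1 := by
      unfold collatzApex; rw [hk, hdiv]
    have h3am : 3 ≤ 3 ^ a * m := le_trans h3a (Nat.le_mul_of_pos_right _ hmge)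
    have hkp : collatzKp n = b := by
      unfold collatzKp
      refine (val2_iff _ b (by rw [hapex]; omega)).mpr ?_
      rw [hapex]
      obtain ⟨t, hts⟩ : ∃ t, 3 ^ a * s = 2 ^ (b + 1) * t + (2 ^ b + 1) := by
        refine ⟨(3 ^ a * s) / 2 ^ (b + 1), ?_⟩
        have := Nat.div_add_mod (3 ^ a * s) (2 ^ (b + 1))
        rw [hs3] at this; omega
      have e0 : 3 ^ a * m = 2 ^ (b + 1) * (3 ^ a * q) + 3 ^ a * s := by
        rw [hm]; ring
      have expand : 2 ^ (b + 1) * (3 ^ a * q + t) =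
          2 ^ (b + 1) * (3 ^ a * q) + 2 ^ (b + 1) * t := by ring
      have e2 : 3 ^ a * m - 1 = 2 ^ (b + 1) * (3 ^ a * q + t) + 2 ^ b := by omega
      rw [e2, Nat.mul_add_mod]
      exact Nat.mod_eq_of_lt (pow2_lt b)
    exact ⟨hodd, hk, hkp⟩

lemma div_div_div_same (x y z : ℝ) (hz : z ≠ 0) : (x / z) / (y / z) = x / y := by
  rcases eq_or_ne y 0 with rfl | hy
  · simp
  · field_simp

end Aux

open scoped Classical in
/-- Corollary 1: Among odd integers (uniform in {1,3,...,2N-1}, N → ∞),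
the density of {k = a} is 2^{-a}, the density of {k' = b} conditional on {k = a} is
2^{-b}, and the joint density of {k = a, k' = b} is 2^{-(a+b)}: k and k' are
asymptotically independent. -/
theorem density_k_kprime (a b : ℕ) (ha : 1 ≤ a) (hb : 1 ≤ b) :
    Tendsto (fun N : ℕ =>
      (((Finset.range (2 * N)).filter fun n => Odd n ∧ collatzK n = a).card : ℝ) / N)
      atTop (nhds ((1 / 2 : ℝ) ^ a)) ∧
    Tendsto (fun N : ℕ =>
      (((Finset.range (2 * N)).filter fun n =>
          Odd n ∧ collatzK n = a ∧ collatzKp n = b).card : ℝ) /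
        (((Finset.range (2 * N)).filter fun n => Odd n ∧ collatzK n = a).card : ℝ))
      atTop (nhds ((1 / 2 : ℝ) ^ b)) ∧
    Tendsto (fun N : ℕ =>
      (((Finset.range (2 * N)).filter fun n =>
          Odd n ∧ collatzK n = a ∧ collatzKp n = b).card : ℝ) / N)
      atTop (nhds ((1 / 2 : ℝ) ^ (a + b))) := by
  obtain ⟨s, hs1, hs2, hs3⟩ := exists_s a b hb
  have hpa : 0 < 2 ^ a := by positivity
  -- set equalities
  have hset1 : ∀ N : ℕ, ((Finset.range (2 * N)).filter fun n => Odd n ∧ collatzK n = a)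
      = (Finset.range (2 * N)).filter (fun n => n % 2 ^ (a + 1) = 2 ^ a - 1) := by
    intro N
    apply Finset.filter_congr
    intro n _
    exact key1 a n ha
  have hset2 : ∀ N : ℕ,
      ((Finset.range (2 * N)).filter fun n => Odd n ∧ collatzK n = a ∧ collatzKp n = b)
      = (Finset.range (2 * N)).filter (fun n => n % 2 ^ (a + b + 1) = 2 ^ a * s - 1) := by
    intro N
    apply Finset.filter_congr
    intro n _
    exact key2 a b s n ha hb hs1 hs2 hs3
  have hr1lt : 2 ^ a - 1 < 2 ^ (a + 1) := by have := pow2_lt a; omega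
  have hr2lt : 2 ^ a * s - 1 < 2 ^ (a + b + 1) := by
    have h1 : 2 ^ a * s < 2 ^ a * 2 ^ (b + 1) := mul_lt_mul_of_pos_left hs2 hpa
    have h2 : 2 ^ (a + b + 1) = 2 ^ a * 2 ^ (b + 1) := by rw [← pow_add]; congr 1
    omega
  have hv1 : (2 : ℝ) / ((2 ^ (a + 1) : ℕ) : ℝ) = (1 / 2 : ℝ) ^ a := by
    push_cast
    rw [div_pow, one_pow, pow_succ]
    rw [div_eq_div_iff (by positivity) (by positivity)]
    ring
  have hv2 : (2 : ℝ) / ((2 ^ (a + b + 1) : ℕ) : ℝ) = (1 / 2 : ℝ) ^ (a + b) := by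
    push_cast
    rw [div_pow, one_pow, pow_succ]
    rw [div_eq_div_iff (by positivity) (by positivity)]
    ring
  have P1 : Tendsto (fun N : ℕ =>
      (((Finset.range (2 * N)).filter fun n => Odd n ∧ collatzK n = a).card : ℝ) / N)
      atTop (nhds ((1 / 2 : ℝ) ^ a)) := by
    rw [← hv1]
    apply (tendsto_count (2 ^ (a + 1)) (2 ^ a - 1) hr1lt).congr
    intro N
    rw [hset1 N]
  have P3 : Tendsto (fun N : ℕ =>
      (((Finset.range (2 * N)).filter fun n =>
          Odd n ∧ collatzK n = a ∧ collatzKp n = b).card : ℝ) / N)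
      atTop (nhds ((1 / 2 : ℝ) ^ (a + b))) := by
    rw [← hv2]
    apply (tendsto_count (2 ^ (a + b + 1)) (2 ^ a * s - 1) hr2lt).congr
    intro N
    rw [hset2 N]
  refine ⟨P1, ?_, P3⟩
  have hne : ((1 / 2 : ℝ) ^ a) ≠ 0 := by positivity
  have P2 := P3.div P1 hne
  have hval : ((1 / 2 : ℝ) ^ (a + b)) / ((1 / 2 : ℝ) ^ a) = (1 / 2 : ℝ) ^ b := by
    rw [pow_add]
    field_simp
  rw [hval] at P2
  apply P2.congr'
  filter_upwards [eventually_ge_atTop 1] with N hN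
  have hN0 : (N : ℝ) ≠ 0 := by
    have : (0:ℝ) < N := by exact_mod_cast hN
    exact ne_of_gt this
  exact div_div_div_same _ _ _ hN0
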